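/- The function θ₃(0,τ) is nonvanishing for every τ in the upper half plane. -/

import Mathlib

open Complex

/-- `θ₃(0,τ) = ∏_{j≥1} (1−q^j)(1+q^{j−1/2})²` with `q^{j−1/2} = e^{2πiτ(j−1/2)}`. -/
noncomputable def jacobiTheta3Zero (τ : ℂ) : ℂ :=
  ∏' j : ℕ,
    ((1 - Complex.exp (2 * (Real.pi : ℂ) * Complex.I * τ) ^ (j + 1)) *
      (1 + Complex.exp (2 * (Real.pi : ℂ) * Complex.I * τ * ((j : ℂ) + 1 / 2))) ^ 2)

/-- `θ₃(0,τ)` is nonvanishing for every `τ` in the upper half plane. -/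
theorem jacobiTheta3Zero_ne_zero (τ : ℂ) (hτ : 0 < τ.im) : jacobiTheta3Zero τ ≠ 0 := by
  set q : ℂ := Complex.exp (2 * (Real.pi : ℂ) * Complex.I * τ) with hqdef
  set r : ℕ → ℂ := fun j => Complex.exp (2 * (Real.pi : ℂ) * Complex.I * τ * ((j : ℂ) + 1 / 2))
    with hrdef
  set f : ℕ → ℂ := fun j => (1 - q ^ (j + 1)) * (1 + r j) ^ 2 with hfdef
  have pi_pos := Real.pi_pos
  have hqnorm : ‖q‖ = Real.exp (-(2 * Real.pi * τ.im)) := by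
    rw [hqdef, Complex.norm_exp]
    congr 1
    simp [Complex.mul_re, Complex.mul_im]
  have hq1 : ‖q‖ < 1 := by
    rw [hqnorm, Real.exp_lt_one_iff]
    nlinarith
  have hq0 : (0:ℝ) ≤ ‖q‖ := norm_nonneg _
  have hrnorm : ∀ j : ℕ, ‖r j‖ = Real.exp (-(2 * Real.pi * τ.im * ((j:ℝ) + 1/2))) := by
    intro j
    rw [hrdef, Complex.norm_exp]
    congr 1
    simp [Complex.mul_re, Complex.mul_im]
  have hrle : ∀ j : ℕ, ‖r j‖ ≤ ‖q‖ ^ j := by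
    intro j
    rw [hrnorm, hqnorm, ← Real.exp_nat_mul]
    apply Real.exp_le_exp.2
    have hj : (0:ℝ) ≤ (j:ℝ) := Nat.cast_nonneg j
    nlinarith
  have hr1 : ∀ j : ℕ, ‖r j‖ < 1 := by
    intro j
    rw [hrnorm, Real.exp_lt_one_iff]
    have hj : (0:ℝ) ≤ (j:ℝ) := Nat.cast_nonneg j
    have hpos : 0 < 2 * Real.pi * τ.im * ((j:ℝ) + 1/2) := by positivity
    linarith
  have hfne : ∀ j, f j ≠ 0 := by
    intro j
    apply mul_ne_zero
    · intro h
      have h1 : (1:ℂ) = q ^ (j+1) := sub_eq_zero.mp h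
      have h2 : ‖q ^ (j+1)‖ < 1 := by
        rw [norm_pow]
        exact pow_lt_one₀ hq0 hq1 (Nat.succ_ne_zero j)
      rw [← h1] at h2
      simp at h2
    · apply pow_ne_zero
      intro h
      have h1 : r j = -1 := by linear_combination h
      have h2 := hr1 j
      rw [h1] at h2
      simp at h2
  have hsum : Summable fun j => Complex.log (f j) := by
    apply Summable.of_norm_bounded_eventually
      ((summable_geometric_of_lt_one hq0 hq1).mul_left (21/2))
    rw [Nat.cofinite_eq_atTop]
    have htend : Filter.Tendsto (fun j : ℕ => ‖q‖ ^ j) Filter.atTop (nhds 0) :=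
      tendsto_pow_atTop_nhds_zero_of_lt_one hq0 hq1
    filter_upwards [htend.eventually (gt_mem_nhds (by norm_num : (0:ℝ) < 1/24))] with j hj
    have hx0 : (0:ℝ) ≤ ‖q‖ ^ j := pow_nonneg hq0 j
    have hx1 : ‖q‖ ^ j ≤ 1/24 := le_of_lt hj
    have ha : ‖q ^ (j+1)‖ ≤ ‖q‖ ^ j := by
      rw [norm_pow, pow_succ]
      nlinarith [hq1.le]
    have hr : ‖r j‖ ≤ ‖q‖ ^ j := hrle j
    have hr0 : (0:ℝ) ≤ ‖r j‖ := norm_nonneg _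
    have hf1 : ‖f j - 1‖ ≤ 7 * ‖q‖ ^ j := by
      have hrw : f j - 1 = -(q^(j+1)) * (1 + r j)^2 + (2 * r j + r j ^ 2) := by
        simp only [hfdef]
        ring
      rw [hrw]
      have h3 : ‖(1 + r j)‖ ≤ 2 := by
        calc ‖(1 + r j)‖ ≤ ‖(1:ℂ)‖ + ‖r j‖ := norm_add_le _ _
        _ ≤ 2 := by rw [norm_one]; nlinarith
      calc ‖-(q^(j+1)) * (1 + r j)^2 + (2 * r j + r j ^ 2)‖
          ≤ ‖-(q^(j+1)) * (1 + r j)^2‖ + ‖2 * r j + r j ^ 2‖ := norm_add_le _ _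
        _ ≤ ‖q^(j+1)‖ * ‖1 + r j‖^2 + (2 * ‖r j‖ + ‖r j‖^2) := by
            rw [norm_mul, norm_neg, norm_pow, norm_pow]
            have h4 : ‖2 * r j + r j ^ 2‖ ≤ 2 * ‖r j‖ + ‖r j‖^2 := by
              refine (norm_add_le _ _).trans ?_
              rw [norm_mul, norm_pow]
              simp
            exact add_le_add le_rfl h4
        _ ≤ 7 * ‖q‖ ^ j := by
            have h5 : ‖1 + r j‖^2 ≤ 4 := by nlinarith [norm_nonneg (1 + r j)]
            have h6 : ‖q^(j+1)‖ * ‖1 + r j‖^2 ≤ 4 * ‖q‖ ^ j := by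
              nlinarith [norm_nonneg (q^(j+1)), sq_nonneg ‖1 + r j‖,
                mul_le_mul ha h5 (sq_nonneg _) hx0]
            have h7 : ‖r j‖^2 ≤ ‖q‖ ^ j := by nlinarith [mul_le_mul hr hr hr0 hx0]
            linarith
    have hhalf : ‖f j - 1‖ ≤ 1/2 := by nlinarith
    have hlog : ‖Complex.log (1 + (f j - 1))‖ ≤ (3/2) * ‖f j - 1‖ :=
      Complex.norm_log_one_add_half_le_self hhalf
    rw [add_sub_cancel] at hlog
    calc ‖Complex.log (f j)‖ ≤ (3/2) * ‖f j - 1‖ := hlog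
      _ ≤ (21/2) * ‖q‖ ^ j := by nlinarith
  have h2 := Complex.cexp_tsum_eq_tprod hfne hsum
  have hjt : jacobiTheta3Zero τ = ∏' n, f n := rfl
  rw [hjt, ← h2]
  exact Complex.exp_ne_zero _
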